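/- Let S̄ be a finite set, let (Ω, 𝓕, P) be a probability space with a filtration (𝓕_i)_{i=0}^{N}, and let Ȳ^{(1)}, …, Ȳ^{(N)} be S̄-valued random variables such that Ȳ^{(i)} is 𝓕_i-measurable, and for each i there is an 𝓕_{i−1}-measurable random probability vector T_i on S̄ such that P(Ȳ^{(i)} = s̄' | 𝓕_{i−1}) = T_i(s̄') almost surely for every s̄' ∈ S̄. Define the empirical distribution P_Y(s̄') = (1/N)·Σ_{i=1}^N 1{Ȳ^{(i)} = s̄'} and the averaged conditional distribution P_T(s̄') = (1/N)·Σ_{i=1}^N T_i(s̄'). Then for every ε > 0, with probability at least 1 − 2^{|S̄|}·exp(−N·ε²/8), we have Σ_{s̄'∈S̄} |P_Y(s̄') − P_T(s̄')| ≤ ε. -/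

import Mathlib

open MeasureTheory ProbabilityTheory
open scoped ENNReal

lemma exp_le_cosh_add_mul_sinh {l d : ℝ} (hd : |d| ≤ 1) :
    Real.exp (l * d) ≤ Real.cosh l + d * Real.sinh l := by
  obtain ⟨h1, h2⟩ := abs_le.1 hd
  have key := convexOn_exp.2 (Set.mem_univ (-l)) (Set.mem_univ l)
    (show (0:ℝ) ≤ (1-d)/2 by linarith) (show (0:ℝ) ≤ (1+d)/2 by linarith) (by ring)
  simp only [smul_eq_mul] at key
  rw [show (1-d)/2 * (-l) + (1+d)/2 * l = l * d by ring] at key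
  rw [Real.cosh_eq, Real.sinh_eq]
  linarith [key]

lemma integrable_of_bdd {Ω : Type*} {mΩ : MeasurableSpace Ω} {μ : Measure Ω}
    [IsFiniteMeasure μ] {f : Ω → ℝ} (hf : AEStronglyMeasurable f μ) (c : ℝ)
    (h : ∀ ω, |f ω| ≤ c) : Integrable f μ :=
  (integrable_const c).mono' hf (Filter.Eventually.of_forall (by
    simpa [Real.norm_eq_abs] using h))

lemma azuma_mgf {Ω : Type*} {mΩ : MeasurableSpace Ω} (μ : Measure Ω) [IsProbabilityMeasure μ]
    (ℱ : Filtration ℕ mΩ) (N : ℕ) (D : ℕ → Ω → ℝ)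
    (hadp : ∀ i ∈ Finset.Icc 1 N, Measurable[ℱ i] (D i))
    (hbdd : ∀ i ∈ Finset.Icc 1 N, ∀ ω, |D i ω| ≤ 1)
    (hmean : ∀ i ∈ Finset.Icc 1 N, μ[D i | ℱ (i-1)] =ᵐ[μ] 0)
    (l : ℝ) :
    ∀ k, k ≤ N → ∫ ω, Real.exp (l * ∑ i ∈ Finset.Icc 1 k, D i ω) ∂μ ≤ (Real.cosh l)^k := by
  intro k
  induction k with
  | zero =>
    intro _
    simp [show Finset.Icc 1 0 = (∅ : Finset ℕ) from rfl]
  | succ k ih =>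
    intro hkN
    have hkN' : k ≤ N := Nat.le_of_succ_le hkN
    have hk1 : k + 1 ∈ Finset.Icc 1 N := Finset.mem_Icc.2 ⟨Nat.succ_le_succ (Nat.zero_le _), hkN⟩
    set S : Ω → ℝ := fun ω => ∑ i ∈ Finset.Icc 1 k, D i ω with hS
    have hSmeas : Measurable[ℱ k] S := by
      apply Finset.measurable_sum
      intro i hi
      obtain ⟨hi1, hi2⟩ := Finset.mem_Icc.1 hi
      exact (hadp i (Finset.mem_Icc.2 ⟨hi1, hi2.trans hkN'⟩)).mono (ℱ.mono hi2) le_rfl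
    have hSbdd : ∀ ω, |S ω| ≤ k := by
      intro ω
      calc |S ω| ≤ ∑ i ∈ Finset.Icc 1 k, |D i ω| := Finset.abs_sum_le_sum_abs _ _
        _ ≤ ∑ i ∈ Finset.Icc 1 k, 1 := Finset.sum_le_sum (fun i hi => by
            obtain ⟨hi1, hi2⟩ := Finset.mem_Icc.1 hi
            exact hbdd i (Finset.mem_Icc.2 ⟨hi1, hi2.trans hkN'⟩) ω)
        _ = k := by simp
    set g : Ω → ℝ := fun ω => Real.exp (l * S ω) with hg
    have hgmeas : Measurable[ℱ k] g := (hSmeas.const_mul l).exp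
    have hgmeas0 : Measurable g := hgmeas.mono (ℱ.le k) le_rfl
    have hgnonneg : ∀ ω, 0 ≤ g ω := fun ω => (Real.exp_pos _).le
    have hgbdd : ∀ ω, |g ω| ≤ Real.exp (|l| * k) := by
      intro ω
      rw [abs_of_nonneg (hgnonneg ω)]
      apply Real.exp_le_exp.2
      calc l * S ω ≤ |l * S ω| := le_abs_self _
        _ = |l| * |S ω| := abs_mul _ _
        _ ≤ |l| * k := by
            exact mul_le_mul_of_nonneg_left (hSbdd ω) (abs_nonneg l)
    have hg_int : Integrable g μ := integrable_of_bdd hgmeas0.aestronglyMeasurable _ hgbdd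
    have hDmeas : Measurable (D (k+1)) := (hadp _ hk1).mono (ℱ.le _) le_rfl
    have hD_int : Integrable (D (k+1)) μ :=
      integrable_of_bdd hDmeas.aestronglyMeasurable 1 (hbdd _ hk1)
    have hgD_int : Integrable (fun ω => g ω * D (k+1) ω) μ := by
      apply integrable_of_bdd (hgmeas0.mul hDmeas).aestronglyMeasurable (Real.exp (|l| * k) * 1)
      intro ω
      rw [Pi.mul_apply, abs_mul]
      exact mul_le_mul (hgbdd ω) (hbdd _ hk1 ω) (abs_nonneg _) (Real.exp_nonneg _)
    -- conditional mean zero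
    have hmean' : μ[D (k+1) | ℱ k] =ᵐ[μ] 0 := by
      have := hmean (k+1) hk1
      simpa using this
    have hpull : μ[(fun ω => g ω * D (k+1) ω) | ℱ k] =ᵐ[μ] fun ω => g ω * (μ[D (k+1) | ℱ k]) ω := by
      have := condExp_stronglyMeasurable_mul_of_bound (ℱ.le k) hgmeas.stronglyMeasurable hD_int
        (Real.exp (|l| * k)) (Filter.Eventually.of_forall (fun ω => by
          simpa [Real.norm_eq_abs] using hgbdd ω))
      exact this
    have hgD_zero : ∫ ω, g ω * D (k+1) ω ∂μ = 0 := by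
      rw [← integral_condExp (ℱ.le k)]
      have : μ[(fun ω => g ω * D (k+1) ω) | ℱ k] =ᵐ[μ] 0 := by
        refine hpull.trans ?_
        filter_upwards [hmean'] with ω hω
        simp [hω]
      rw [integral_congr_ae this]
      simp
    -- split the sum
    have hsplit : ∀ ω, (∑ i ∈ Finset.Icc 1 (k+1), D i ω) = S ω + D (k+1) ω := by
      intro ω
      rw [hS]
      rw [← Finset.sum_Icc_succ_top (Nat.one_le_iff_ne_zero.2 (Nat.succ_ne_zero k)) (fun i => D i ω)]
    have hint1 : Integrable (fun ω => g ω * Real.exp (l * D (k+1) ω)) μ := by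
      apply integrable_of_bdd (hgmeas0.mul ((hDmeas.const_mul l).exp)).aestronglyMeasurable
        (Real.exp (|l| * k) * Real.exp |l|)
      intro ω
      rw [Pi.mul_apply, abs_mul]
      apply mul_le_mul (hgbdd ω) _ (abs_nonneg _) (Real.exp_nonneg _)
      rw [abs_of_nonneg (Real.exp_nonneg _)]
      apply Real.exp_le_exp.2
      calc l * D (k+1) ω ≤ |l * D (k+1) ω| := le_abs_self _
        _ = |l| * |D (k+1) ω| := abs_mul _ _
        _ ≤ |l| * 1 := mul_le_mul_of_nonneg_left (hbdd _ hk1 ω) (abs_nonneg l)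
        _ = |l| := mul_one _
    have hint2 : Integrable (fun ω => Real.cosh l * g ω + Real.sinh l * (g ω * D (k+1) ω)) μ :=
      (hg_int.const_mul _).add (hgD_int.const_mul _)
    calc ∫ ω, Real.exp (l * ∑ i ∈ Finset.Icc 1 (k+1), D i ω) ∂μ
        = ∫ ω, g ω * Real.exp (l * D (k+1) ω) ∂μ := by
          apply integral_congr_ae
          filter_upwards with ω
          rw [hsplit ω, mul_add, Real.exp_add]
      _ ≤ ∫ ω, Real.cosh l * g ω + Real.sinh l * (g ω * D (k+1) ω) ∂μ := by
          apply integral_mono hint1 hint2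
          intro ω
          have := exp_le_cosh_add_mul_sinh (l := l) (hbdd _ hk1 ω)
          have h2 := mul_le_mul_of_nonneg_left this (hgnonneg ω)
          dsimp only
          nlinarith [h2]
      _ = Real.cosh l * ∫ ω, g ω ∂μ + Real.sinh l * ∫ ω, g ω * D (k+1) ω ∂μ := by
          rw [integral_add (hg_int.const_mul _) (hgD_int.const_mul _),
            integral_const_mul, integral_const_mul]
      _ = Real.cosh l * ∫ ω, g ω ∂μ := by rw [hgD_zero]; ring
      _ ≤ Real.cosh l * (Real.cosh l)^k :=
          mul_le_mul_of_nonneg_left (ih hkN') (Real.cosh_pos (x := l)).le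
      _ = (Real.cosh l)^(k+1) := by ring

theorem stmt3 {Ω : Type*} {mΩ : MeasurableSpace Ω} (μ : Measure Ω) [IsProbabilityMeasure μ]
    {Sb : Type*} [Fintype Sb] [Nonempty Sb] [DecidableEq Sb]
    [MeasurableSpace Sb] [MeasurableSingletonClass Sb]
    -- a filtration (𝓕_i) on Ω
    (ℱ : Filtration ℕ mΩ)
    -- Sb-valued random variables Y 1, ..., Y N, with Y i measurable w.r.t. 𝓕_i
    (N : ℕ) (Y : ℕ → Ω → Sb)
    (hYmeas : ∀ i ∈ Finset.Icc 1 N, Measurable[ℱ i] (Y i))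
    -- the 𝓕_{i−1}-measurable random probability vectors T i
    (T : ℕ → Sb → Ω → ℝ)
    (hTmeas : ∀ i ∈ Finset.Icc 1 N, ∀ sb, StronglyMeasurable[ℱ (i - 1)] (T i sb))
    (hT0 : ∀ i ∈ Finset.Icc 1 N, ∀ sb ω, 0 ≤ T i sb ω)
    (hT1 : ∀ i ∈ Finset.Icc 1 N, ∀ ω, ∑ sb, T i sb ω = 1)
    -- P(Y i = sb | 𝓕_{i−1}) = T i sb almost surely
    (hcond : ∀ i ∈ Finset.Icc 1 N, ∀ sb,
      μ[(fun ω => if Y i ω = sb then (1 : ℝ) else 0) | ℱ (i - 1)] =ᵐ[μ] T i sb)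
    (ε : ℝ) (hε : 0 < ε) :
    -- with probability at least 1 − 2^|Sb|·exp(−N·ε²/8), ‖P_Y − P_T‖₁ ≤ ε
    1 - ENNReal.ofReal ((2 : ℝ) ^ (Fintype.card Sb) * Real.exp (-(N : ℝ) * ε ^ 2 / 8))
      ≤ μ {ω | ∑ sb : Sb,
          |(1 / (N : ℝ)) * ∑ i ∈ Finset.Icc 1 N, (if Y i ω = sb then (1 : ℝ) else 0)
            - (1 / (N : ℝ)) * ∑ i ∈ Finset.Icc 1 N, T i sb ω| ≤ ε} := by
  by_cases hN : N = 0
  · subst hN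
    have h1 : (1:ℝ≥0∞) ≤ ENNReal.ofReal ((2 : ℝ) ^ (Fintype.card Sb)
        * Real.exp (-(0 : ℕ) * ε ^ 2 / 8)) := by
      have : (-((0:ℕ):ℝ)) * ε ^ 2 / 8 = 0 := by norm_num
      rw [this, Real.exp_zero, mul_one]
      apply ENNReal.one_le_ofReal.2
      have h := Nat.one_le_two_pow (n := Fintype.card Sb)
      calc (1:ℝ) = ((1:ℕ):ℝ) := by norm_num
        _ ≤ (((2:ℕ)^(Fintype.card Sb) : ℕ) : ℝ) := by exact_mod_cast h
        _ = (2:ℝ)^(Fintype.card Sb) := by push_cast; ring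
    exact le_trans (le_of_eq (tsub_eq_zero_of_le h1)) zero_le
  have hN1 : 1 ≤ N := Nat.one_le_iff_ne_zero.2 hN
  have hNpos : (0:ℝ) < N := by exact_mod_cast Nat.pos_of_ne_zero hN
  -- the martingale differences and their partial sums, per subset A
  set D : Finset Sb → ℕ → Ω → ℝ :=
    fun A i ω => ∑ s ∈ A, ((if Y i ω = s then (1:ℝ) else 0) - T i s ω) with hDdef
  set Z : Finset Sb → Ω → ℝ := fun A ω => ∑ i ∈ Finset.Icc 1 N, D A i ω with hZdef
  have hindmeas : ∀ i ∈ Finset.Icc 1 N, ∀ s : Sb,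
      Measurable[ℱ i] (fun ω => if Y i ω = s then (1:ℝ) else 0) := by
    intro i hi s
    exact Measurable.ite (hYmeas i hi (measurableSet_singleton s))
      measurable_const measurable_const
  have hDadp : ∀ A, ∀ i ∈ Finset.Icc 1 N, Measurable[ℱ i] (D A i) := by
    intro A i hi
    apply Finset.measurable_sum
    intro s _
    exact (hindmeas i hi s).sub
      (((hTmeas i hi s).measurable).mono (ℱ.mono (Nat.sub_le i 1)) le_rfl)
  have hTA : ∀ (A : Finset Sb), ∀ i ∈ Finset.Icc 1 N, ∀ ω,
      0 ≤ ∑ s ∈ A, T i s ω ∧ ∑ s ∈ A, T i s ω ≤ 1 := by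
    intro A i hi ω
    constructor
    · exact Finset.sum_nonneg (fun s _ => hT0 i hi s ω)
    · calc ∑ s ∈ A, T i s ω ≤ ∑ s : Sb, T i s ω :=
            Finset.sum_le_sum_of_subset_of_nonneg (Finset.subset_univ A)
              (fun s _ _ => hT0 i hi s ω)
        _ = 1 := hT1 i hi ω
  have hDsplit : ∀ A i ω, D A i ω
      = (if Y i ω ∈ A then (1:ℝ) else 0) - ∑ s ∈ A, T i s ω := by
    intro A i ω
    rw [hDdef]
    simp only []
    rw [Finset.sum_sub_distrib, Finset.sum_ite_eq]
  have hDbdd : ∀ A, ∀ i ∈ Finset.Icc 1 N, ∀ ω, |D A i ω| ≤ 1 := by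
    intro A i hi ω
    obtain ⟨ht0, ht1⟩ := hTA A i hi ω
    rw [hDsplit A i ω, abs_le]
    by_cases h : Y i ω ∈ A <;> simp [h] <;> constructor <;> linarith
  have hint1 : ∀ i ∈ Finset.Icc 1 N, ∀ s : Sb,
      Integrable (fun ω => if Y i ω = s then (1:ℝ) else 0) μ := by
    intro i hi s
    apply integrable_of_bdd ((hindmeas i hi s).mono (ℱ.le i) le_rfl).aestronglyMeasurable 1
    intro ω; split_ifs <;> norm_num
  have hint2 : ∀ i ∈ Finset.Icc 1 N, ∀ s : Sb, Integrable (T i s) μ := by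
    intro i hi s
    apply integrable_of_bdd
      (((hTmeas i hi s).measurable).mono (ℱ.le _) le_rfl).aestronglyMeasurable 1
    intro ω
    rw [abs_of_nonneg (hT0 i hi s ω)]
    calc T i s ω ≤ ∑ s' : Sb, T i s' ω :=
          Finset.single_le_sum (fun s' _ => hT0 i hi s' ω) (Finset.mem_univ s)
      _ = 1 := hT1 i hi ω
  have hDmean : ∀ A, ∀ i ∈ Finset.Icc 1 N, μ[D A i | ℱ (i-1)] =ᵐ[μ] 0 := by
    intro A i hi
    have hzero : ∀ s ∈ A,
        μ[(fun ω => (if Y i ω = s then (1:ℝ) else 0) - T i s ω) | ℱ (i-1)] =ᵐ[μ] 0 := by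
      intro s _
      have h2 : μ[T i s | ℱ (i-1)] = T i s :=
        condExp_of_stronglyMeasurable (ℱ.le _) (hTmeas i hi s) (hint2 i hi s)
      have h1 : μ[(fun ω => (if Y i ω = s then (1:ℝ) else 0) - T i s ω) | ℱ (i-1)]
          =ᵐ[μ] μ[(fun ω => if Y i ω = s then (1:ℝ) else 0) | ℱ (i-1)] - μ[T i s | ℱ (i-1)] :=
        condExp_sub (hint1 i hi s) (hint2 i hi s) _
      refine h1.trans ?_
      filter_upwards [hcond i hi s] with ω hω
      rw [Pi.sub_apply, hω, h2]
      simp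
    have hfun : D A i = ∑ s ∈ A, (fun ω => (if Y i ω = s then (1:ℝ) else 0) - T i s ω) := by
      ext ω
      rw [hDdef]
      simp [Finset.sum_apply]
    rw [hfun]
    refine (condExp_finset_sum (fun s _ => (hint1 i hi s).sub (hint2 i hi s)) _).trans ?_
    have hae : ∀ᵐ ω ∂μ, ∀ s ∈ A,
        (μ[(fun ω => (if Y i ω = s then (1:ℝ) else 0) - T i s ω) | ℱ (i-1)]) ω = 0 := by
      rw [Filter.eventually_all_finset]
      intro s hs
      filter_upwards [hzero s hs] with ω hω using hω
    filter_upwards [hae] with ω hω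
    rw [Finset.sum_apply]
    exact Finset.sum_eq_zero hω
  -- Chernoff bound per subset A
  have hmarkov : ∀ A : Finset Sb,
      μ {ω | (N:ℝ) * ε / 2 < Z A ω} ≤ ENNReal.ofReal (Real.exp (-(N:ℝ) * ε ^ 2 / 8)) := by
    intro A
    have hlpos : (0:ℝ) < ε / 2 := by linarith
    have hZmeas : Measurable (Z A) := by
      rw [hZdef]
      exact Finset.measurable_sum _ (fun i hi => (hDadp A i hi).mono (ℱ.le i) le_rfl)
    have hZbdd : ∀ ω, |Z A ω| ≤ N := by
      intro ω
      rw [hZdef]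
      calc |∑ i ∈ Finset.Icc 1 N, D A i ω| ≤ ∑ i ∈ Finset.Icc 1 N, |D A i ω| :=
            Finset.abs_sum_le_sum_abs _ _
        _ ≤ ∑ i ∈ Finset.Icc 1 N, 1 := Finset.sum_le_sum (fun i hi => hDbdd A i hi ω)
        _ = ((N:ℝ)) := by simp [Nat.card_Icc]
    have hfint : Integrable (fun ω => Real.exp (ε/2 * Z A ω)) μ := by
      apply integrable_of_bdd ((hZmeas.const_mul (ε/2)).exp).aestronglyMeasurable
        (Real.exp (ε/2 * N))
      intro ω
      rw [abs_of_nonneg (Real.exp_nonneg _)]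
      apply Real.exp_le_exp.2
      apply mul_le_mul_of_nonneg_left _ hlpos.le
      exact le_trans (le_abs_self _) (hZbdd ω)
    have hsub : {ω | (N:ℝ) * ε / 2 < Z A ω}
        ⊆ {ω | Real.exp (ε/2 * ((N:ℝ) * ε / 2)) ≤ Real.exp (ε/2 * Z A ω)} := by
      intro ω hω
      exact Real.exp_le_exp.2 (mul_le_mul_of_nonneg_left (le_of_lt hω) hlpos.le)
    have hmk := mul_meas_ge_le_integral_of_nonneg
      (Filter.Eventually.of_forall (fun ω => (Real.exp_pos (ε/2 * Z A ω)).le)) hfint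
      (Real.exp (ε/2 * ((N:ℝ) * ε / 2)))
    have hI : ∫ ω, Real.exp (ε/2 * Z A ω) ∂μ ≤ Real.exp ((N:ℝ) * ε ^ 2 / 8) := by
      calc ∫ ω, Real.exp (ε/2 * Z A ω) ∂μ ≤ (Real.cosh (ε/2))^N :=
            azuma_mgf μ ℱ N (D A) (hDadp A) (hDbdd A) (hDmean A) (ε/2) N le_rfl
        _ ≤ (Real.exp ((ε/2)^2/2))^N :=
            pow_le_pow_left₀ (Real.cosh_pos (x := ε/2)).le (Real.cosh_le_exp_half_sq (ε/2)) N
        _ = Real.exp ((N:ℝ) * ((ε/2)^2/2)) := (Real.exp_nat_mul _ N).symm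
        _ = Real.exp ((N:ℝ) * ε ^ 2 / 8) := by congr 1; ring
    refine le_trans (measure_mono hsub) ?_
    rw [ENNReal.le_ofReal_iff_toReal_le (measure_ne_top μ _) (Real.exp_nonneg _)]
    have hc : (0:ℝ) < Real.exp (ε/2 * ((N:ℝ) * ε / 2)) := Real.exp_pos _
    have key : Real.exp (-(N:ℝ) * ε ^ 2 / 8) * Real.exp (ε/2 * ((N:ℝ) * ε / 2))
        = Real.exp ((N:ℝ) * ε ^ 2 / 8) := by
      rw [← Real.exp_add]; congr 1; ring
    refine le_of_mul_le_mul_right ?_ hc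
    calc (μ {ω | Real.exp (ε/2 * ((N:ℝ) * ε / 2)) ≤ Real.exp (ε/2 * Z A ω)}).toReal
          * Real.exp (ε/2 * ((N:ℝ) * ε / 2))
        = Real.exp (ε/2 * ((N:ℝ) * ε / 2))
          * (μ {ω | Real.exp (ε/2 * ((N:ℝ) * ε / 2)) ≤ Real.exp (ε/2 * Z A ω)}).toReal :=
          mul_comm _ _
      _ ≤ ∫ ω, Real.exp (ε/2 * Z A ω) ∂μ := hmk
      _ ≤ Real.exp ((N:ℝ) * ε ^ 2 / 8) := hI
      _ = Real.exp (-(N:ℝ) * ε ^ 2 / 8) * Real.exp (ε/2 * ((N:ℝ) * ε / 2)) := key.symm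
  -- good event inclusion
  have hGsub : {ω | ∀ A : Finset Sb, Z A ω ≤ (N:ℝ) * ε / 2}
      ⊆ {ω | ∑ sb : Sb,
          |(1 / (N : ℝ)) * ∑ i ∈ Finset.Icc 1 N, (if Y i ω = sb then (1 : ℝ) else 0)
            - (1 / (N : ℝ)) * ∑ i ∈ Finset.Icc 1 N, T i sb ω| ≤ ε} := by
    intro ω hω
    simp only [Set.mem_setOf_eq] at hω ⊢
    set u : Sb → ℝ := fun s => ∑ i ∈ Finset.Icc 1 N, (if Y i ω = s then (1:ℝ) else 0) with hu
    set v : Sb → ℝ := fun s => ∑ i ∈ Finset.Icc 1 N, T i s ω with hv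
    have husum : ∑ s : Sb, u s = N := by
      rw [hu]
      rw [Finset.sum_comm]
      have : ∀ i ∈ Finset.Icc 1 N, (∑ s : Sb, if Y i ω = s then (1:ℝ) else 0) = 1 := by
        intro i _
        rw [Finset.sum_ite_eq]
        simp
      rw [Finset.sum_congr rfl this]
      simp [Nat.card_Icc]
    have hvsum : ∑ s : Sb, v s = N := by
      rw [hv]
      rw [Finset.sum_comm]
      rw [Finset.sum_congr rfl (fun i hi => hT1 i hi ω)]
      simp [Nat.card_Icc]
    set A0 : Finset Sb := Finset.univ.filter (fun s => v s ≤ u s) with hA0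
    have hZA0 : Z A0 ω = ∑ s ∈ A0, (u s - v s) := by
      rw [hZdef, hDdef]
      simp only []
      rw [Finset.sum_comm]
      apply Finset.sum_congr rfl
      intro s _
      rw [Finset.sum_sub_distrib, hu, hv]
    set a : ℝ := ∑ s ∈ A0, (u s - v s) with ha
    set b : ℝ := ∑ s ∈ Finset.univ.filter (fun s => ¬ v s ≤ u s), (u s - v s) with hb
    have hab : a + b = 0 := by
      rw [ha, hb, Finset.sum_filter_add_sum_filter_not Finset.univ _ (fun s => u s - v s),
        Finset.sum_sub_distrib, husum, hvsum]
      ring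
    have habs : ∑ s : Sb, |u s - v s| = a - b := by
      have e1 : ∑ s ∈ Finset.univ.filter (fun s => v s ≤ u s), |u s - v s| = a := by
        rw [ha, hA0]
        exact Finset.sum_congr rfl (fun s hs => abs_of_nonneg
          (sub_nonneg.2 ((Finset.mem_filter.1 hs).2)))
      have e2 : ∑ s ∈ Finset.univ.filter (fun s => ¬ v s ≤ u s), |u s - v s| = -b := by
        rw [hb, ← Finset.sum_neg_distrib]
        refine Finset.sum_congr rfl (fun s hs => ?_)
        have hsle := (Finset.mem_filter.1 hs).2
        rw [abs_of_neg (by push_neg at hsle; linarith), neg_sub]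
      rw [← Finset.sum_filter_add_sum_filter_not Finset.univ (fun s => v s ≤ u s)
        (fun s => |u s - v s|), e1, e2]
      ring
    have hterm : ∀ s : Sb,
        |(1 / (N : ℝ)) * u s - (1 / (N : ℝ)) * v s| = (1 / (N:ℝ)) * |u s - v s| := by
      intro s
      rw [← mul_sub, abs_mul, abs_of_nonneg (by positivity : (0:ℝ) ≤ 1 / (N:ℝ))]
    calc ∑ sb : Sb, |(1 / (N : ℝ)) * u sb - (1 / (N : ℝ)) * v sb|
        = (1 / (N:ℝ)) * ∑ s : Sb, |u s - v s| := by
          rw [Finset.mul_sum]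
          exact Finset.sum_congr rfl (fun s _ => hterm s)
      _ = (1 / (N:ℝ)) * (2 * a) := by
          rw [habs]
          have hba : b = -a := by linarith
          rw [hba]; ring
      _ ≤ (1 / (N:ℝ)) * ((N:ℝ) * ε) := by
          apply mul_le_mul_of_nonneg_left _ (by positivity)
          have := hω A0
          rw [← hZA0]
          linarith
      _ = ε := by field_simp
  -- final assembly
  rw [tsub_le_iff_right]
  have hGc : μ ({ω | ∀ A : Finset Sb, Z A ω ≤ (N:ℝ) * ε / 2}ᶜ)
      ≤ ENNReal.ofReal ((2 : ℝ) ^ (Fintype.card Sb) * Real.exp (-(N : ℝ) * ε ^ 2 / 8)) := by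
    have hGceq : {ω | ∀ A : Finset Sb, Z A ω ≤ (N:ℝ) * ε / 2}ᶜ
        ⊆ ⋃ A : Finset Sb, {ω | (N:ℝ) * ε / 2 < Z A ω} := by
      intro ω hω
      simp only [Set.mem_compl_iff, Set.mem_setOf_eq, not_forall, not_le] at hω
      obtain ⟨A, hA⟩ := hω
      exact Set.mem_iUnion.2 ⟨A, hA⟩
    calc μ ({ω | ∀ A : Finset Sb, Z A ω ≤ (N:ℝ) * ε / 2}ᶜ)
        ≤ μ (⋃ A : Finset Sb, {ω | (N:ℝ) * ε / 2 < Z A ω}) := measure_mono hGceq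
      _ ≤ ∑' A : Finset Sb, μ {ω | (N:ℝ) * ε / 2 < Z A ω} := measure_iUnion_le _
      _ ≤ ∑' _A : Finset Sb, ENNReal.ofReal (Real.exp (-(N:ℝ) * ε ^ 2 / 8)) :=
          ENNReal.tsum_le_tsum hmarkov
      _ = (Fintype.card (Finset Sb)) * ENNReal.ofReal (Real.exp (-(N:ℝ) * ε ^ 2 / 8)) := by
          rw [tsum_fintype]
          simp [Finset.sum_const, nsmul_eq_mul, Finset.card_univ]
      _ = ENNReal.ofReal ((2 : ℝ) ^ (Fintype.card Sb) * Real.exp (-(N : ℝ) * ε ^ 2 / 8)) := by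
          rw [Fintype.card_finset]
          rw [← ENNReal.ofReal_natCast (2 ^ Fintype.card Sb),
            ← ENNReal.ofReal_mul (by positivity)]
          congr 1
          push_cast
          ring
  calc (1:ℝ≥0∞) = μ Set.univ := measure_univ.symm
    _ ≤ μ ({ω | ∑ sb : Sb,
          |(1 / (N : ℝ)) * ∑ i ∈ Finset.Icc 1 N, (if Y i ω = sb then (1 : ℝ) else 0)
            - (1 / (N : ℝ)) * ∑ i ∈ Finset.Icc 1 N, T i sb ω| ≤ ε}
        ∪ {ω | ∀ A : Finset Sb, Z A ω ≤ (N:ℝ) * ε / 2}ᶜ) := by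
        apply measure_mono
        intro ω _
        by_cases h : ω ∈ {ω | ∀ A : Finset Sb, Z A ω ≤ (N:ℝ) * ε / 2}
        · exact Or.inl (hGsub h)
        · exact Or.inr h
    _ ≤ μ _ + μ _ := measure_union_le _ _
    _ ≤ μ _ + ENNReal.ofReal ((2 : ℝ) ^ (Fintype.card Sb)
          * Real.exp (-(N : ℝ) * ε ^ 2 / 8)) := add_le_add_right hGc _
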